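/- arXiv:1811.05971 — 2 statements merged into one kernel-verified Lean document; each statement's English description precedes it below -/
import Mathlib

section
/- Let (λ_j) and (μ_j) be strictly increasing sequences of positive reals tending to infinity, and (r_j), (s_j) sequences of nonzero reals with Σ |r_j|/λ_j² < ∞ and Σ |s_j|/μ_j² < ∞. If b + Σ_j (r_j/λ_j) · 1/(η + λ_j) = c + Σ_j (s_j/μ_j) · 1/(η + μ_j) for all real η > 0 (with b = −Σ r_j/λ_j, c = −Σ s_j/μ_j both assumed absolutely convergent), then λ_j = μ_j and r_j = s_j for all j. -/
open Filter Topology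


private lemma limit_helper {v x0 x1 y0 A B : ℝ} (hv : 0 ≤ v) (hx0 : 0 < x0)
    (hx1 : 0 ≤ x1) (hx1' : x1 < x0) (hy0 : 0 ≤ y0) (hy0' : y0 < x0)
    (hA : 0 ≤ A) (hB : 0 ≤ B)
    (h : ∀ n : ℕ, v * x0 ^ (n+1) ≤ A * x1 ^ (n+1) + B * y0 ^ (n+1)) : v = 0 := by
  have key : ∀ n : ℕ, v ≤ A * (x1/x0) ^ (n+1) + B * (y0/x0) ^ (n+1) := by
    intro n
    have h0 : (0:ℝ) < x0 ^ (n+1) := pow_pos hx0 _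
    calc v = v * x0 ^ (n+1) / x0 ^ (n+1) := by field_simp
    _ ≤ (A * x1 ^ (n+1) + B * y0 ^ (n+1)) / x0 ^ (n+1) := by gcongr; exact h n
    _ = A * (x1/x0) ^ (n+1) + B * (y0/x0) ^ (n+1) := by rw [div_pow, div_pow]; ring
  have t1 : Tendsto (fun n : ℕ => (x1/x0) ^ (n+1)) atTop (𝓝 0) :=
    (tendsto_pow_atTop_nhds_zero_of_lt_one (by positivity) ((div_lt_one hx0).2 hx1')).comp
      (tendsto_add_atTop_nat 1)
  have t2 : Tendsto (fun n : ℕ => (y0/x0) ^ (n+1)) atTop (𝓝 0) :=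
    (tendsto_pow_atTop_nhds_zero_of_lt_one (by positivity) ((div_lt_one hx0).2 hy0')).comp
      (tendsto_add_atTop_nat 1)
  have lim : Tendsto (fun n : ℕ => A * (x1/x0) ^ (n+1) + B * (y0/x0) ^ (n+1)) atTop (𝓝 0) := by
    simpa using (t1.const_mul A).add (t2.const_mul B)
  exact le_antisymm (ge_of_tendsto' lim key) hv

private lemma summable_ax (a x : ℕ → ℝ) (hx0 : ∀ j, 0 ≤ x j) {c : ℝ} (hxc : ∀ j, x j ≤ c)
    (hA : Summable fun j => |a j|) (m : ℕ) : Summable fun j => a j * x j ^ m := by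
  apply Summable.of_norm
  apply (hA.mul_right (c ^ m)).of_nonneg_of_le (fun j => norm_nonneg _)
  intro j
  rw [Real.norm_eq_abs, abs_mul, abs_pow, abs_of_nonneg (hx0 j)]
  exact mul_le_mul_of_nonneg_left (pow_le_pow_left₀ (hx0 j) (hxc j) m) (abs_nonneg _)

private lemma tsum_abs_bound (a x : ℕ → ℝ) (hx0 : ∀ j, 0 ≤ x j) {c : ℝ}
    (hxc : ∀ j, x j ≤ c) (hA : Summable fun j => |a j|) (m : ℕ) :
    |∑' j, a j * x j ^ m| ≤ (∑' j, |a j|) * c ^ m := by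
  have hbd : ∀ j, |a j * x j ^ m| ≤ |a j| * c ^ m := by
    intro j
    rw [abs_mul, abs_pow, abs_of_nonneg (hx0 j)]
    exact mul_le_mul_of_nonneg_left (pow_le_pow_left₀ (hx0 j) (hxc j) m) (abs_nonneg _)
  have hsum : Summable fun j => |a j * x j ^ m| :=
    (hA.mul_right (c ^ m)).of_nonneg_of_le (fun j => abs_nonneg _) hbd
  have hnorm : ‖∑' j, a j * x j ^ m‖ ≤ ∑' j, ‖a j * x j ^ m‖ :=
    norm_tsum_le_tsum_norm (by exact hsum)
  rw [Real.norm_eq_abs] at hnorm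
  calc |∑' j, a j * x j ^ m| ≤ ∑' j, |a j * x j ^ m| := hnorm
  _ ≤ ∑' j, |a j| * c ^ m := Summable.tsum_le_tsum hbd hsum (hA.mul_right _)
  _ = (∑' j, |a j|) * c ^ m := tsum_mul_right

private lemma tail_tsum_le (a : ℕ → ℝ) (hA : Summable fun j => |a j|) :
    ∑' j, |a (j+1)| ≤ ∑' j, |a j| := by
  have h2 := Summable.tsum_eq_zero_add hA
  have := abs_nonneg (a 0)
  linarith

private lemma tail_bound (a x : ℕ → ℝ) (hxpos : ∀ j, 0 < x j) (hanti : Antitone x)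
    (hA : Summable fun j => |a j|) (m : ℕ) :
    |∑' j, a (j+1) * x (j+1) ^ m| ≤ (∑' j, |a j|) * x 1 ^ m := by
  have hA' : Summable fun j => |a (j+1)| := (summable_nat_add_iff 1).2 hA
  calc |∑' j, a (j+1) * x (j+1) ^ m|
      ≤ (∑' j, |a (j+1)|) * x 1 ^ m :=
        tsum_abs_bound _ _ (fun j => (hxpos _).le) (fun j => hanti (by omega)) hA' m
  _ ≤ (∑' j, |a j|) * x 1 ^ m := by
      have := tail_tsum_le a hA
      have hx1 : (0:ℝ) ≤ x 1 ^ m := pow_nonneg (hxpos 1).le m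
      nlinarith

private lemma moment_x0_le (a b x y : ℕ → ℝ) (hx : StrictAnti x) (hy : StrictAnti y)
    (hxpos : ∀ j, 0 < x j) (hypos : ∀ j, 0 < y j) (ha0 : a 0 ≠ 0)
    (hA : Summable fun j => |a j|) (hB : Summable fun j => |b j|)
    (h : ∀ n : ℕ, ∑' j, a j * x j ^ (n+1) = ∑' j, b j * y j ^ (n+1)) :
    x 0 ≤ y 0 := by
  by_contra hc
  push_neg at hc
  apply ha0
  rw [← abs_eq_zero]
  have hx10 : x 1 < x 0 := hx (by omega)
  refine limit_helper (A := ∑' j, |a j|) (B := ∑' j, |b j|) (abs_nonneg _) (hxpos 0) (hxpos 1).le hx10 (hypos 0).le hc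
    (tsum_nonneg fun j => abs_nonneg _) (tsum_nonneg fun j => abs_nonneg _) ?_
  intro n
  have hsa : Summable fun j => a j * x j ^ (n+1) :=
    summable_ax a x (fun j => (hxpos j).le) (fun j => (hx.antitone (Nat.zero_le j))) hA _
  have hsplit := Summable.tsum_eq_zero_add hsa
  have key : a 0 * x 0 ^ (n+1) = (∑' j, b j * y j ^ (n+1)) - ∑' j, a (j+1) * x (j+1) ^ (n+1) := by
    rw [← h n, hsplit]; ring
  have h1 : |a 0 * x 0 ^ (n+1)| ≤ |∑' j, a (j+1) * x (j+1) ^ (n+1)| + |∑' j, b j * y j ^ (n+1)| := by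
    rw [key]; exact (abs_sub _ _).trans (by rw [add_comm])
  have h2 := tail_bound a x hxpos hx.antitone hA (n+1)
  have h3 := tsum_abs_bound b y (fun j => (hypos j).le) (fun j => hy.antitone (Nat.zero_le j)) hB (n+1)
  have h4 : |a 0 * x 0 ^ (n+1)| = |a 0| * x 0 ^ (n+1) := by
    rw [abs_mul, abs_pow, abs_of_nonneg (hxpos 0).le]
  linarith

private lemma moment_head (a b x y : ℕ → ℝ) (hx : StrictAnti x) (hy : StrictAnti y)
    (hxpos : ∀ j, 0 < x j) (hypos : ∀ j, 0 < y j) (ha0 : a 0 ≠ 0) (hb0 : b 0 ≠ 0)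
    (hA : Summable fun j => |a j|) (hB : Summable fun j => |b j|)
    (h : ∀ n : ℕ, ∑' j, a j * x j ^ (n+1) = ∑' j, b j * y j ^ (n+1)) :
    x 0 = y 0 ∧ a 0 = b 0 := by
  have hxy : x 0 = y 0 :=
    le_antisymm (moment_x0_le a b x y hx hy hxpos hypos ha0 hA hB h)
      (moment_x0_le b a y x hy hx hypos hxpos hb0 hB hA fun n => (h n).symm)
  refine ⟨hxy, ?_⟩
  have hab : |a 0 - b 0| = 0 := by
    refine limit_helper (A := ∑' j, |a j|) (B := ∑' j, |b j|) (abs_nonneg _) (hxpos 0)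
      (hxpos 1).le (hx (by omega)) (hypos 1).le (by rw [hxy]; exact hy (by omega))
      (tsum_nonneg fun j => abs_nonneg _) (tsum_nonneg fun j => abs_nonneg _) ?_
    intro n
    have hsa : Summable fun j => a j * x j ^ (n+1) :=
      summable_ax a x (fun j => (hxpos j).le) (fun j => (hx.antitone (Nat.zero_le j))) hA _
    have hsb : Summable fun j => b j * y j ^ (n+1) :=
      summable_ax b y (fun j => (hypos j).le) (fun j => (hy.antitone (Nat.zero_le j))) hB _
    have hn := h n
    rw [Summable.tsum_eq_zero_add hsa, Summable.tsum_eq_zero_add hsb] at hn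
    have key : (a 0 - b 0) * x 0 ^ (n+1) =
        (∑' j, b (j+1) * y (j+1) ^ (n+1)) - ∑' j, a (j+1) * x (j+1) ^ (n+1) := by
      rw [← hxy] at hn; ring_nf; ring_nf at hn; linarith
    have h1 : |(a 0 - b 0) * x 0 ^ (n+1)| ≤
        |∑' j, a (j+1) * x (j+1) ^ (n+1)| + |∑' j, b (j+1) * y (j+1) ^ (n+1)| := by
      rw [key]; exact (abs_sub _ _).trans (by rw [add_comm])
    have h2 := tail_bound a x hxpos hx.antitone hA (n+1)
    have h3 := tail_bound b y hypos hy.antitone hB (n+1)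
    have h4 : |(a 0 - b 0) * x 0 ^ (n+1)| = |a 0 - b 0| * x 0 ^ (n+1) := by
      rw [abs_mul, abs_pow, abs_of_nonneg (hxpos 0).le]
    linarith
  have := abs_eq_zero.1 hab
  linarith

set_option maxHeartbeats 1000000 in
private lemma moment_all : ∀ (k : ℕ) (a b x y : ℕ → ℝ), StrictAnti x → StrictAnti y →
    (∀ j, 0 < x j) → (∀ j, 0 < y j) → (∀ j, a j ≠ 0) → (∀ j, b j ≠ 0) →
    (Summable fun j => |a j|) → (Summable fun j => |b j|) →
    (∀ n : ℕ, ∑' j, a j * x j ^ (n+1) = ∑' j, b j * y j ^ (n+1)) →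
    x k = y k ∧ a k = b k := by
  intro k
  induction k with
  | zero =>
    intro a b x y hx hy hxpos hypos ha hb hA hB h
    exact moment_head a b x y hx hy hxpos hypos (ha 0) (hb 0) hA hB h
  | succ k ih =>
    intro a b x y hx hy hxpos hypos ha hb hA hB h
    obtain ⟨hxy0, hab0⟩ := moment_head a b x y hx hy hxpos hypos (ha 0) (hb 0) hA hB h
    have hshift : ∀ n : ℕ,
        ∑' j, a (j+1) * x (j+1) ^ (n+1) = ∑' j, b (j+1) * y (j+1) ^ (n+1) := by
      intro n
      have hsa : Summable fun j => a j * x j ^ (n+1) :=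
        summable_ax a x (fun j => (hxpos j).le) (fun j => (hx.antitone (Nat.zero_le j))) hA _
      have hsb : Summable fun j => b j * y j ^ (n+1) :=
        summable_ax b y (fun j => (hypos j).le) (fun j => (hy.antitone (Nat.zero_le j))) hB _
      have hn := h n
      rw [Summable.tsum_eq_zero_add hsa, Summable.tsum_eq_zero_add hsb, hxy0, hab0] at hn
      linarith
    have hA' : Summable fun j => |a (j+1)| := (summable_nat_add_iff 1).2 hA
    have hB' : Summable fun j => |b (j+1)| := (summable_nat_add_iff 1).2 hB
    exact ih (fun j => a (j+1)) (fun j => b (j+1)) (fun j => x (j+1)) (fun j => y (j+1))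
      (fun i j hij => hx (by omega)) (fun i j hij => hy (by omega))
      (fun j => hxpos _) (fun j => hypos _) (fun j => ha _) (fun j => hb _)
      hA' hB' hshift


private lemma summable_pole (a c : ℕ → ℝ) (hc : ∀ j, 0 < c j)
    (hA : Summable fun j => |a j|) {x : ℝ} (hx : 0 < x) (m : ℕ) :
    Summable fun j => a j / (x + c j) ^ m := by
  apply Summable.of_norm
  apply (hA.mul_right ((x ^ m)⁻¹)).of_nonneg_of_le (fun j => norm_nonneg _)
  intro j
  have hxc : (0:ℝ) < x + c j := by linarith [hc j]
  have hpow : x ^ m ≤ (x + c j) ^ m := pow_le_pow_left₀ hx.le (by linarith [hc j]) m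
  rw [Real.norm_eq_abs, abs_div, abs_of_nonneg (pow_nonneg hxc.le m), div_eq_mul_inv]
  exact mul_le_mul_of_nonneg_left (by
    apply inv_anti₀ (pow_pos hx m) hpow) (abs_nonneg _)

private lemma hasDerivAt_series (a c : ℕ → ℝ) (hc : ∀ j, 0 < c j)
    (hA : Summable fun j => |a j|) (n : ℕ) {η : ℝ} (hη : 0 < η) :
    HasDerivAt (fun t => ∑' j, a j / (t + c j) ^ (n+1))
      (∑' j, -((n+1) * a j / (η + c j) ^ (n+2))) η := by
  have hs : IsOpen (Set.Ioi (η/2)) := isOpen_Ioi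
  have hmem : ∀ {t : ℝ}, t ∈ Set.Ioi (η/2) → ∀ j, (0:ℝ) < t + c j := by
    intro t ht j
    have : η/2 < t := ht
    have := hc j
    linarith [hη]
  refine hasDerivAt_of_tendstoUniformlyOn (l := (atTop : Filter (Finset ℕ))) (f := fun (T : Finset ℕ) t => ∑ j ∈ T, a j / (t + c j) ^ (n+1))
    (f' := fun (T : Finset ℕ) t => ∑ j ∈ T, -((n+1) * a j / (t + c j) ^ (n+2)))
    (g := fun t => ∑' j, a j / (t + c j) ^ (n+1))
    (g' := fun t => ∑' j, -((n+1) * a j / (t + c j) ^ (n+2))) hs ?_ ?_ ?_ ?_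
  · -- uniform convergence of derivatives
    apply tendstoUniformlyOn_tsum (u := fun j => ((n+1) * |a j|) * ((η/2) ^ (n+2))⁻¹)
      ((hA.mul_left _).mul_right _)
    intro j t ht
    have h1 : (0:ℝ) < t + c j := hmem ht j
    have h2 : (0:ℝ) < η/2 := by linarith
    have hpow : (η/2) ^ (n+2) ≤ (t + c j) ^ (n+2) := by
      apply pow_le_pow_left₀ h2.le
      have : η/2 < t := ht
      linarith [hc j]
    rw [Real.norm_eq_abs, abs_neg, abs_div, abs_mul, abs_of_nonneg (pow_nonneg h1.le _),
      abs_of_nonneg (by positivity : (0:ℝ) ≤ ((n:ℝ)+1)), div_eq_mul_inv]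
    exact mul_le_mul_of_nonneg_left (inv_anti₀ (pow_pos h2 _) hpow) (by positivity)
  · -- each partial sum differentiable
    filter_upwards with T t ht
    apply HasDerivAt.fun_sum
    intro j _
    have h1 : (0:ℝ) < t + c j := hmem ht j
    have hd1 : HasDerivAt (fun s : ℝ => s + c j) 1 t := (hasDerivAt_id t).add_const _
    have hd2 : HasDerivAt (fun s : ℝ => (s + c j) ^ (n+1))
        ((n+1 : ℕ) * (t + c j) ^ n * 1) t := by
      simpa using hd1.fun_pow (n+1)
    have hd3 := (hd2.fun_inv (pow_ne_zero _ h1.ne')).const_mul (a j)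
    convert hd3 using 1
    · rfl
    · funext y; rw [div_eq_mul_inv]
    push_cast
    field_simp
    ring
  · -- pointwise convergence
    intro t ht
    have h1 : (0:ℝ) < t := lt_trans (by linarith) ht
    exact (summable_pole a c hc hA h1 (n+1)).hasSum
  · exact Set.mem_Ioi.2 (by linarith)


private lemma tends_zero (a c : ℕ → ℝ) (hc : ∀ j, 0 < c j)
    (hA : Summable fun j => |a j|) :
    Tendsto (fun η : ℝ => ∑' j, a j * (1 / (η + c j))) atTop (𝓝 0) := by
  refine squeeze_zero_norm' (a := fun η : ℝ => (∑' j, |a j|) * η⁻¹) ?_ ?_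
  · filter_upwards [eventually_gt_atTop (0:ℝ)] with η hη
    have hb := tsum_abs_bound a (fun j => 1 / (η + c j))
      (fun j => by have := hc j; positivity) (c := η⁻¹)
      (fun j => by
        have h1 : (0:ℝ) < η := hη
        have h2 := hc j
        show 1 / (η + c j) ≤ η⁻¹
        rw [one_div]
        exact inv_anti₀ h1 (by linarith)) hA 1
    simp only [pow_one] at hb
    simpa [Real.norm_eq_abs] using hb
  · simpa using (tendsto_inv_atTop_zero).const_mul (∑' j, |a j|)

set_option maxHeartbeats 1000000 in
/-- Identity of two sums of simple poles on the negative real axis: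
if `b + ∑ (rⱼ/λⱼ)/(η+λⱼ) = c + ∑ (sⱼ/μⱼ)/(η+μⱼ)` for all real `η > 0`,
where `b = −∑ rⱼ/λⱼ`, `c = −∑ sⱼ/μⱼ`, then pole locations and residues coincide:
`λⱼ = μⱼ` and `rⱼ = sⱼ` for all `j`. -/
theorem poles_residues_unique
    (lam mu : ℕ → ℝ) (hlam : StrictMono lam) (hmu : StrictMono mu)
    (hlampos : ∀ j, 0 < lam j) (hmupos : ∀ j, 0 < mu j)
    (hlamtop : Filter.Tendsto lam Filter.atTop Filter.atTop)
    (hmutop : Filter.Tendsto mu Filter.atTop Filter.atTop)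
    (r s : ℕ → ℝ) (hr : ∀ j, r j ≠ 0) (hs : ∀ j, s j ≠ 0)
    (hrsum : Summable (fun j => |r j| / (lam j) ^ 2))
    (hssum : Summable (fun j => |s j| / (mu j) ^ 2))
    (hbsum : Summable (fun j => |r j / lam j|))
    (hcsum : Summable (fun j => |s j / mu j|))
    (heq : ∀ η : ℝ, 0 < η →
      (-∑' j, r j / lam j) + ∑' j, (r j / lam j) * (1 / (η + lam j)) =
      (-∑' j, s j / mu j) + ∑' j, (s j / mu j) * (1 / (η + mu j))) :
    ∀ j, lam j = mu j ∧ r j = s j := by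
  set a : ℕ → ℝ := fun j => r j / lam j with ha_def
  set b : ℕ → ℝ := fun j => s j / mu j with hb_def
  have hA : Summable fun j => |a j| := hbsum
  have hB : Summable fun j => |b j| := hcsum
  have heq' : ∀ η : ℝ, 0 < η →
      (-∑' j, a j) + ∑' j, a j * (1 / (η + lam j)) =
      (-∑' j, b j) + ∑' j, b j * (1 / (η + mu j)) := heq
  -- the constant terms agree
  have hBC : (∑' j, a j) - (∑' j, b j) = 0 := by
    have hdiff : Tendsto (fun η : ℝ =>
        (∑' j, a j * (1 / (η + lam j))) - ∑' j, b j * (1 / (η + mu j))) atTop (𝓝 0) := by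
      simpa using (tends_zero a lam hlampos hA).sub (tends_zero b mu hmupos hB)
    have hev : (fun η : ℝ =>
        (∑' j, a j * (1 / (η + lam j))) - ∑' j, b j * (1 / (η + mu j)))
        =ᶠ[atTop] (fun _ : ℝ => (∑' j, a j) - ∑' j, b j) := by
      filter_upwards [eventually_gt_atTop (0:ℝ)] with η hη
      have := heq' η hη
      linarith
    exact (tendsto_nhds_unique (Filter.Tendsto.congr' hev hdiff) tendsto_const_nhds).symm
  -- Step 1: the basic pole-sum identity for all n
  have key : ∀ (n : ℕ) (η : ℝ), 0 < η →
      ∑' j, a j / (η + lam j) ^ (n+1) = ∑' j, b j / (η + mu j) ^ (n+1) := by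
    intro n
    induction n with
    | zero =>
      intro η hη
      have g1 : ∑' j, a j / (η + lam j) ^ (0+1) = ∑' j, a j * (1 / (η + lam j)) :=
        tsum_congr fun j => by rw [pow_one, div_eq_mul_inv, one_div]
      have g2 : ∑' j, b j / (η + mu j) ^ (0+1) = ∑' j, b j * (1 / (η + mu j)) :=
        tsum_congr fun j => by rw [pow_one, div_eq_mul_inv, one_div]
      rw [g1, g2]
      have := heq' η hη
      linarith
    | succ n ih =>
      intro η hη
      have hFa := hasDerivAt_series a lam hlampos hA n hη
      have hFb := hasDerivAt_series b mu hmupos hB n hη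
      have hev : (fun t => ∑' j, a j / (t + lam j) ^ (n+1))
          =ᶠ[𝓝 η] (fun t => ∑' j, b j / (t + mu j) ^ (n+1)) := by
        filter_upwards [Ioi_mem_nhds hη] with t ht using ih t ht
      have hFa' : HasDerivAt (fun t => ∑' j, a j / (t + lam j) ^ (n+1))
          (∑' j, -((n+1) * b j / (η + mu j) ^ (n+2))) η :=
        hFb.congr_of_eventuallyEq hev
      have hder : ∑' j, -((n+1 : ℝ) * a j / (η + lam j) ^ (n+2))
          = ∑' j, -((n+1 : ℝ) * b j / (η + mu j) ^ (n+2)) := hFa.unique hFa'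
      have ea : ∑' j, -((n+1 : ℝ) * a j / (η + lam j) ^ (n+2))
          = -((n:ℝ)+1) * ∑' j, a j / (η + lam j) ^ (n+1+1) := by
        rw [← tsum_mul_left]
        exact tsum_congr fun j => by ring
      have eb : ∑' j, -((n+1 : ℝ) * b j / (η + mu j) ^ (n+2))
          = -((n:ℝ)+1) * ∑' j, b j / (η + mu j) ^ (n+1+1) := by
        rw [← tsum_mul_left]
        exact tsum_congr fun j => by ring
      rw [ea, eb] at hder
      have hne : -((n:ℝ)+1) ≠ 0 := by
        have : (0:ℝ) < (n:ℝ)+1 := by positivity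
        intro hcon; rw [neg_eq_zero] at hcon; linarith
      exact mul_left_cancel₀ hne hder
  -- Step 2: turn into a moment problem at η = 1
  set x : ℕ → ℝ := fun j => 1 / (1 + lam j) with hx_def
  set y : ℕ → ℝ := fun j => 1 / (1 + mu j) with hy_def
  have hxpos : ∀ j, 0 < x j := fun j => by
    have := hlampos j; simp only [hx_def]; positivity
  have hypos : ∀ j, 0 < y j := fun j => by
    have := hmupos j; simp only [hy_def]; positivity
  have hxanti : StrictAnti x := by
    intro i j hij
    have h1 : (0:ℝ) < 1 + lam i := by linarith [hlampos i]
    exact one_div_lt_one_div_of_lt h1 (by have := hlam hij; linarith)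
  have hyanti : StrictAnti y := by
    intro i j hij
    have h1 : (0:ℝ) < 1 + mu i := by linarith [hmupos i]
    exact one_div_lt_one_div_of_lt h1 (by have := hmu hij; linarith)
  have hmom : ∀ n : ℕ, ∑' j, a j * x j ^ (n+1) = ∑' j, b j * y j ^ (n+1) := by
    intro n
    have hk := key n 1 one_pos
    have exa : ∑' j, a j * x j ^ (n+1) = ∑' j, a j / (1 + lam j) ^ (n+1) :=
      tsum_congr fun j => by
        simp only [hx_def, one_div, inv_pow, div_eq_mul_inv, one_mul]
    have exb : ∑' j, b j * y j ^ (n+1) = ∑' j, b j / (1 + mu j) ^ (n+1) :=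
      tsum_congr fun j => by
        simp only [hy_def, one_div, inv_pow, div_eq_mul_inv, one_mul]
    rw [exa, exb]
    exact hk
  have hane : ∀ j, a j ≠ 0 := fun j => div_ne_zero (hr j) (hlampos j).ne'
  have hbne : ∀ j, b j ≠ 0 := fun j => div_ne_zero (hs j) (hmupos j).ne'
  -- Step 3: conclude
  intro j
  obtain ⟨hxy, hab⟩ := moment_all j a b x y hxanti hyanti hxpos hypos hane hbne hA hB hmom
  have hlm : lam j = mu j := by
    have h1 : (1:ℝ) + lam j ≠ 0 := by have := hlampos j; positivity
    have h2 : (1:ℝ) + mu j ≠ 0 := by have := hmupos j; positivity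
    simp only [hx_def, hy_def] at hxy
    rw [div_eq_div_iff h1 h2] at hxy
    linarith
  refine ⟨hlm, ?_⟩
  simp only [ha_def, hb_def] at hab
  rw [hlm, div_eq_div_iff (hmupos j).ne' (hmupos j).ne'] at hab
  exact mul_right_cancel₀ (hmupos j).ne' hab
end

section
/- For λ > 0, 0 < α < 1, and Re z > 0 (z real positive suffices), the Laplace transform of t ↦ E_{α,1}(−λ t^α) is z^{α−1}/(z^α + λ): ∫₀^∞ e^{−z t} E_{α,1}(−λ t^α) dt = z^{α−1}/(z^α + λ) for real z > λ^{1/α}. -/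
/-- Two-parameter Mittag-Leffler function (real argument and parameters). -/
noncomputable def mittagLefflerReal (α β : ℝ) (x : ℝ) : ℝ :=
  ∑' k : ℕ, x ^ k / Real.Gamma (α * k + β)

open MeasureTheory Set

lemma laplace_term_integrable (α lam z : ℝ) (hα : 0 < α) (hz0 : 0 < z) (k : ℕ) :
    IntegrableOn (fun t : ℝ => Real.exp (-(z * t)) *
      ((-(lam * t ^ α)) ^ k / Real.Gamma (α * k + 1))) (Set.Ioi 0) := by
  have hbase : IntegrableOn (fun x : ℝ => x ^ (α * k) * Real.exp (-z * x ^ (1:ℝ)))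
      (Set.Ioi 0) := integrableOn_rpow_mul_exp_neg_mul_rpow
        (by nlinarith [mul_nonneg hα.le (Nat.cast_nonneg k)]) zero_lt_one hz0
  have h2 : IntegrableOn (fun x : ℝ =>
      ((-lam) ^ k / Real.Gamma (α * k + 1)) * (x ^ (α * k) * Real.exp (-z * x ^ (1:ℝ))))
      (Set.Ioi 0) := hbase.const_mul _
  refine h2.congr_fun (fun t ht => ?_) measurableSet_Ioi
  have ht0 : (0:ℝ) < t := ht
  dsimp only
  rw [Real.rpow_one, Real.rpow_mul ht0.le, Real.rpow_natCast]
  rw [show -(lam * t ^ α) = (-lam) * t ^ α by ring, mul_pow]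
  rw [show -z * t = -(z * t) by ring]
  ring

lemma laplace_term_value (α lam z : ℝ) (hα : 0 < α) (hz0 : 0 < z) (k : ℕ) :
    (∫ t in Set.Ioi (0:ℝ), Real.exp (-(z * t)) *
      ((-(lam * t ^ α)) ^ k / Real.Gamma (α * k + 1)))
      = (-lam) ^ k * (1 / z) ^ (α * k + 1) := by
  have hΓ : (0:ℝ) < Real.Gamma (α * k + 1) := Real.Gamma_pos_of_pos (by positivity)
  have hcongr : (∫ t in Set.Ioi (0:ℝ), Real.exp (-(z * t)) *
      ((-(lam * t ^ α)) ^ k / Real.Gamma (α * k + 1)))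
      = ∫ t in Set.Ioi (0:ℝ),
        ((-lam) ^ k / Real.Gamma (α * k + 1)) * (t ^ ((α * k + 1) - 1) * Real.exp (-(z * t))) := by
    refine setIntegral_congr_fun measurableSet_Ioi (fun t ht => ?_)
    have ht0 : (0:ℝ) < t := ht
    rw [show (α * k + 1) - 1 = α * k by ring, Real.rpow_mul ht0.le, Real.rpow_natCast]
    rw [show -(lam * t ^ α) = (-lam) * t ^ α by ring, mul_pow]
    ring
  rw [hcongr, MeasureTheory.integral_const_mul, Real.integral_rpow_mul_exp_neg_mul_Ioi (by positivity) hz0]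
  field_simp

/-- Laplace transform of the Mittag-Leffler function: for `0 < α < 1`, `λ > 0`
and real `z > λ^{1/α}`,
`∫₀^∞ e^{−zt} E_{α,1}(−λ t^α) dt = z^{α−1}/(z^α + λ)`. -/
theorem laplace_mittagLeffler (α lam : ℝ) (hα : 0 < α) (hα1 : α < 1)
    (hlam : 0 < lam) (z : ℝ) (hz : lam ^ (1 / α) < z) :
    (∫ t in Set.Ioi (0:ℝ), Real.exp (-(z * t)) * mittagLefflerReal α 1 (-(lam * t ^ α)))
      = z ^ (α - 1) / (z ^ α + lam) := by
  have hz0 : 0 < z := lt_trans (Real.rpow_pos_of_pos hlam _) hz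
  have hα0 : α ≠ 0 := ne_of_gt hα
  have hzα : lam < z ^ α := by
    have h := Real.rpow_lt_rpow (Real.rpow_pos_of_pos hlam _).le hz hα
    rwa [← Real.rpow_mul hlam.le, one_div, inv_mul_cancel₀ hα0, Real.rpow_one] at h
  have hzαpos : 0 < z ^ α := Real.rpow_pos_of_pos hz0 α
  set F : ℕ → ℝ → ℝ := fun k t => Real.exp (-(z * t)) *
      ((-(lam * t ^ α)) ^ k / Real.Gamma (α * k + 1)) with hF
  -- ratio for geometric series
  have hratio : lam * (1 / z) ^ α = lam / z ^ α := by
    rw [one_div, Real.inv_rpow hz0.le, div_eq_mul_inv]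
  have hr1 : lam / z ^ α < 1 := (div_lt_one hzαpos).mpr hzα
  have hr0 : 0 ≤ lam / z ^ α := by positivity
  -- value of each term's integral
  have hval : ∀ k : ℕ, (∫ t in Set.Ioi (0:ℝ), F k t)
      = (1 / z) * (-(lam * (1 / z) ^ α)) ^ k := by
    intro k
    rw [hF, laplace_term_value α lam z hα hz0 k]
    rw [Real.rpow_add (by positivity), Real.rpow_one, Real.rpow_mul (by positivity),
      Real.rpow_natCast]
    rw [show -(lam * (1/z) ^ α) = (-lam) * (1/z) ^ α by ring, mul_pow]
    ring
  -- norm integrals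
  have hnorm : ∀ k : ℕ, (∫ t in Set.Ioi (0:ℝ), ‖F k t‖)
      = (1 / z) * (lam * (1 / z) ^ α) ^ k := by
    intro k
    have h := laplace_term_value α lam z hα hz0 k
    have hcongr : (∫ t in Set.Ioi (0:ℝ), ‖F k t‖)
        = ∫ t in Set.Ioi (0:ℝ), Real.exp (-(z * t)) *
          ((-(-(lam * t ^ α))) ^ k / Real.Gamma (α * k + 1)) := by
      refine setIntegral_congr_fun measurableSet_Ioi (fun t ht => ?_)
      have ht0 : (0:ℝ) < t := ht
      have hΓ : (0:ℝ) < Real.Gamma (α * k + 1) := Real.Gamma_pos_of_pos (by positivity)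
      have htα : (0:ℝ) < t ^ α := Real.rpow_pos_of_pos ht0 α
      rw [hF]
      simp only [norm_mul, Real.norm_eq_abs, abs_div, Real.abs_exp, abs_pow,
        abs_of_pos hΓ, abs_neg, abs_of_pos (by positivity : (0:ℝ) < lam * t ^ α)]
      rw [neg_neg]
    rw [hcongr]
    have h2 : (∫ t in Set.Ioi (0:ℝ), Real.exp (-(z * t)) *
        ((-(-(lam * t ^ α))) ^ k / Real.Gamma (α * k + 1)))
        = (-(-lam)) ^ k * (1 / z) ^ (α * k + 1) := by
      simpa using laplace_term_value α (-lam) z hα hz0 k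
    rw [h2, neg_neg]
    rw [Real.rpow_add (by positivity), Real.rpow_one, Real.rpow_mul (by positivity),
      Real.rpow_natCast, mul_pow]
    ring
  have hsum : Summable fun k : ℕ => ∫ t in Set.Ioi (0:ℝ), ‖F k t‖ := by
    simp_rw [hnorm]
    exact (summable_geometric_of_lt_one (by rw [hratio]; exact hr0)
      (by rw [hratio]; exact hr1)).mul_left _
  have hint : ∀ k : ℕ, IntegrableOn (F k) (Set.Ioi 0) := fun k =>
    laplace_term_integrable α lam z hα hz0 k
  have hswap := integral_tsum_of_summable_integral_norm (μ := volume.restrict (Set.Ioi 0))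
    hint hsum
  have hML : ∀ t : ℝ, Real.exp (-(z * t)) * mittagLefflerReal α 1 (-(lam * t ^ α))
      = ∑' k : ℕ, F k t := by
    intro t
    rw [mittagLefflerReal, ← tsum_mul_left]
  calc (∫ t in Set.Ioi (0:ℝ), Real.exp (-(z * t)) * mittagLefflerReal α 1 (-(lam * t ^ α)))
      = ∫ t in Set.Ioi (0:ℝ), ∑' k : ℕ, F k t := by simp_rw [hML]
    _ = ∑' k : ℕ, ∫ t in Set.Ioi (0:ℝ), F k t := hswap.symm
    _ = ∑' k : ℕ, (1 / z) * (-(lam * (1 / z) ^ α)) ^ k := by simp_rw [hval]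
    _ = (1 / z) * ∑' k : ℕ, (-(lam * (1 / z) ^ α)) ^ k := tsum_mul_left
    _ = (1 / z) * (1 - (-(lam * (1 / z) ^ α)))⁻¹ := by
        rw [tsum_geometric_of_norm_lt_one]
        rw [norm_neg, Real.norm_eq_abs, hratio, abs_of_nonneg hr0]
        exact hr1
    _ = z ^ (α - 1) / (z ^ α + lam) := by
        rw [hratio, Real.rpow_sub hz0, Real.rpow_one]
        field_simp
        rw [sub_neg_eq_add, div_self (by positivity)]
end
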